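/- Let p > 1, β ≥ 1, γ > 0, and let P, Q be probability measures on ℝ with distribution functions F, G having finite moments of order β(p−1)(1+γ). Let Fₙ be the empirical distribution function of n i.i.d. samples from P. Then E[∫₀¹ |h_p'(Fₙ^{-1}(t) − G^{-1}(t)) − h_p'(F^{-1}(t) − G^{-1}(t))|^β dt] → 0 as n → ∞, where h_p'(x) = p·sign(x)|x|^{p−1}. -/

import Mathlib

open MeasureTheory ProbabilityTheory Filter
open scoped ENNReal Topology
open Set

noncomputable section

/-- The quantile function of a measure on `ℝ`: `F^{-1}(t) = inf {x | t ≤ μ(Iic x)}`. -/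
def qf (μ : Measure ℝ) (t : ℝ) : ℝ :=
  sInf {x | ENNReal.ofReal t ≤ μ (Set.Iic x)}

/-- The empirical measure of the first `n` samples. -/
def empMeas {Ω E : Type*} [MeasurableSpace E] (n : ℕ) (X : ℕ → Ω → E) (ω : Ω) : Measure E :=
  (n : ℝ≥0∞)⁻¹ • ∑ i ∈ Finset.range n, Measure.dirac (X i ω)

/-- `h_p'(x) = p · sign(x) · |x|^{p-1}`, the derivative of `h_p(x) = |x|^p`. -/
def hp' (p x : ℝ) : ℝ := p * Real.sign x * |x| ^ (p - 1)


section qfbasic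
variable {μ : Measure ℝ} [IsProbabilityMeasure μ] {t x : ℝ}

lemma qf_nonempty (ht : t < 1) : {x | ENNReal.ofReal t ≤ μ (Set.Iic x)}.Nonempty := by
  have h1 : ENNReal.ofReal t < 1 := ENNReal.ofReal_lt_one.2 ht
  have h2 := tendsto_measure_Iic_atTop (α := ℝ) μ
  rw [measure_univ] at h2
  have := (h2.eventually_const_le h1).exists
  obtain ⟨x, hx⟩ := this
  exact ⟨x, hx⟩

lemma qf_bddBelow (ht : 0 < t) : BddBelow {x | ENNReal.ofReal t ≤ μ (Set.Iic x)} := by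
  have h0 : (0:ℝ≥0∞) < ENNReal.ofReal t := ENNReal.ofReal_pos.2 ht
  have h2 : Tendsto (fun n : ℕ => μ (Set.Iic (-(n:ℝ)))) atTop (𝓝 (μ (⋂ n : ℕ, Set.Iic (-(n:ℝ))))) := by
    apply tendsto_measure_iInter_atTop
    · exact fun n => measurableSet_Iic.nullMeasurableSet
    · intro a b hab
      exact Iic_subset_Iic.2 (by simp [hab, Nat.cast_le])
    · exact ⟨0, measure_ne_top _ _⟩
  have hempty : (⋂ n : ℕ, Set.Iic (-(n:ℝ))) = ∅ := by
    ext y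
    simp only [mem_iInter, mem_Iic, mem_empty_iff_false, iff_false, not_forall]
    obtain ⟨n, hn⟩ := exists_nat_gt (-y)
    exact ⟨n, by push_neg; linarith⟩
  rw [hempty, measure_empty] at h2
  obtain ⟨n, hn⟩ := (h2.eventually_lt_const h0).exists
  refine ⟨-(n:ℝ), fun z hz => ?_⟩
  by_contra hzy
  push_neg at hzy
  exact absurd (le_trans hz (measure_mono (Iic_subset_Iic.2 hzy.le))) (not_le.2 hn)

lemma qf_mem (ht : t ∈ Set.Ioo (0:ℝ) 1) : ENNReal.ofReal t ≤ μ (Set.Iic (qf μ t)) := by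
  set S := {x | ENNReal.ofReal t ≤ μ (Set.Iic x)} with hS
  have hne : S.Nonempty := qf_nonempty ht.2
  have hbd : BddBelow S := qf_bddBelow ht.1
  have key : ∀ k : ℕ, ENNReal.ofReal t ≤ μ (Set.Iic (qf μ t + 1/(k+1))) := by
    intro k
    have hlt : sInf S < sInf S + 1/(k+1) := lt_add_of_pos_right _ (by positivity)
    obtain ⟨z, hzS, hz⟩ := (csInf_lt_iff hbd hne).1 hlt
    exact le_trans hzS (measure_mono (Iic_subset_Iic.2 hz.le))
  have h2 : Tendsto (fun k : ℕ => μ (Set.Iic (qf μ t + 1/(k+1)))) atTop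
      (𝓝 (μ (⋂ k : ℕ, Set.Iic (qf μ t + 1/(k+1))))) := by
    apply tendsto_measure_iInter_atTop
    · exact fun n => measurableSet_Iic.nullMeasurableSet
    · intro a b hab
      apply Iic_subset_Iic.2
      have hab' : (a:ℝ) ≤ b := Nat.cast_le.2 hab
      have : (1:ℝ)/(b+1) ≤ 1/(a+1) := by
        apply one_div_le_one_div_of_le (by positivity)
        linarith
      linarith
    · exact ⟨0, measure_ne_top _ _⟩
  have hint : (⋂ k : ℕ, Set.Iic (qf μ t + 1/(k+1))) = Set.Iic (qf μ t) := by
    ext y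
    simp only [mem_iInter, mem_Iic]
    constructor
    · intro h
      by_contra hy
      push_neg at hy
      obtain ⟨k, hk⟩ := exists_nat_gt (1/(y - qf μ t))
      have hpos : 0 < y - qf μ t := by linarith
      have hk1 : (1:ℝ)/(k+1) < y - qf μ t := by
        rw [div_lt_iff₀ (by positivity)]
        rw [div_lt_iff₀ hpos] at hk
        nlinarith [hk, hpos]
      linarith [h k]
    · intro h k
      have : (0:ℝ) < 1/(k+1) := by positivity
      linarith
  rw [hint] at h2
  exact ge_of_tendsto h2 (Filter.Eventually.of_forall key)

lemma qf_le_iff (ht : t ∈ Set.Ioo (0:ℝ) 1) :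
    qf μ t ≤ x ↔ ENNReal.ofReal t ≤ μ (Set.Iic x) := by
  constructor
  · intro h
    exact le_trans (qf_mem ht) (measure_mono (Iic_subset_Iic.2 h))
  · intro h
    exact csInf_le (qf_bddBelow ht.1) h

lemma monotoneOn_qf : MonotoneOn (qf μ) (Set.Ioo (0:ℝ) 1) := by
  intro a ha b hb hab
  apply le_csInf (qf_nonempty hb.2)
  intro x hx
  exact csInf_le (qf_bddBelow ha.1) (le_trans (ENNReal.ofReal_le_ofReal hab) hx)

end qfbasic

section qfmeas
variable {μ : Measure ℝ} [IsProbabilityMeasure μ]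

lemma measurable_qf_if :
    Measurable (fun t => if t ∈ Set.Ioo (0:ℝ) 1 then qf μ t else 0) := by
  apply measurable_of_Iic
  intro x
  have : (fun t => if t ∈ Set.Ioo (0:ℝ) 1 then qf μ t else 0) ⁻¹' (Set.Iic x) =
      (Set.Ioo (0:ℝ) 1 ∩ Set.Iic ((μ (Set.Iic x)).toReal)) ∪
      ((Set.Ioo (0:ℝ) 1)ᶜ ∩ {t : ℝ | (0:ℝ) ≤ x}) := by
    ext t
    by_cases ht : t ∈ Set.Ioo (0:ℝ) 1
    · simp only [Set.mem_preimage, Set.mem_Iic, if_pos ht, Set.mem_union, Set.mem_inter_iff,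
        Set.mem_compl_iff, ht, not_true, false_and, or_false, true_and, Set.mem_setOf_eq,
        if_true]
      rw [qf_le_iff ht, ENNReal.ofReal_le_iff_le_toReal (measure_ne_top μ _)]
    · simp only [Set.mem_preimage, Set.mem_Iic, if_neg ht, Set.mem_union, Set.mem_inter_iff,
        Set.mem_compl_iff, ht, not_false_iff, true_and, false_and, false_or, Set.mem_setOf_eq,
        if_false]
  rw [this]
  exact ((measurableSet_Ioo.inter measurableSet_Iic)).union
    (measurableSet_Ioo.compl.inter (MeasurableSet.const _))

lemma aemeasurable_qf : AEMeasurable (qf μ) (volume.restrict (Set.Ioo (0:ℝ) 1)) := by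
  refine ⟨fun t => if t ∈ Set.Ioo (0:ℝ) 1 then qf μ t else 0, measurable_qf_if, ?_⟩
  rw [EventuallyEq, ae_restrict_iff' measurableSet_Ioo]
  exact Filter.Eventually.of_forall (fun t ht => by simp [ht])

lemma vol_Ioo_inter_Iic {c : ℝ} (hc0 : 0 ≤ c) (hc1 : c ≤ 1) :
    volume (Set.Ioo (0:ℝ) 1 ∩ Set.Iic c) = ENNReal.ofReal c := by
  apply le_antisymm
  · calc volume (Set.Ioo (0:ℝ) 1 ∩ Set.Iic c) ≤ volume (Set.Ioc (0:ℝ) c) := by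
          apply measure_mono
          rintro t ⟨⟨h1, _⟩, h3⟩
          exact ⟨h1, h3⟩
      _ = ENNReal.ofReal c := by rw [Real.volume_Ioc, sub_zero]
  · calc ENNReal.ofReal c = volume (Set.Ioo (0:ℝ) c) := by rw [Real.volume_Ioo, sub_zero]
      _ ≤ volume (Set.Ioo (0:ℝ) 1 ∩ Set.Iic c) := by
          apply measure_mono
          rintro t ⟨h1, h2⟩
          exact ⟨⟨h1, lt_of_lt_of_le h2 hc1⟩, h2.le⟩

lemma map_qf : Measure.map (qf μ) (volume.restrict (Set.Ioo (0:ℝ) 1)) = μ := by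
  have : IsProbabilityMeasure (volume.restrict (Set.Ioo (0:ℝ) 1)) := by
    constructor
    rw [Measure.restrict_apply_univ, Real.volume_Ioo]
    norm_num
  have hmap : IsProbabilityMeasure (Measure.map (qf μ) (volume.restrict (Set.Ioo (0:ℝ) 1))) :=
    Measure.isProbabilityMeasure_map aemeasurable_qf
  apply MeasureTheory.Measure.ext_of_Iic
  intro x
  rw [Measure.map_apply_of_aemeasurable aemeasurable_qf measurableSet_Iic,
    Measure.restrict_apply' measurableSet_Ioo]
  have hset : (qf μ) ⁻¹' (Set.Iic x) ∩ Set.Ioo (0:ℝ) 1 =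
      Set.Ioo (0:ℝ) 1 ∩ Set.Iic ((μ (Set.Iic x)).toReal) := by
    ext t
    simp only [Set.mem_inter_iff, Set.mem_preimage, Set.mem_Iic]
    constructor
    · rintro ⟨hq, ht⟩
      exact ⟨ht, (ENNReal.ofReal_le_iff_le_toReal (measure_ne_top μ _)).1 ((qf_le_iff ht).1 hq)⟩
    · rintro ⟨ht, hq⟩
      exact ⟨(qf_le_iff ht).2 ((ENNReal.ofReal_le_iff_le_toReal (measure_ne_top μ _)).2 hq), ht⟩
  rw [hset, vol_Ioo_inter_Iic ENNReal.toReal_nonneg, ENNReal.ofReal_toReal (measure_ne_top μ _)]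
  exact ENNReal.toReal_le_of_le_ofReal zero_le_one (by rw [ENNReal.ofReal_one]; exact prob_le_one)

lemma lintegral_qf (f : ℝ → ℝ≥0∞) (hf : Measurable f) :
    ∫⁻ t in Set.Ioo (0:ℝ) 1, f (qf μ t) = ∫⁻ x, f x ∂μ := by
  calc ∫⁻ t in Set.Ioo (0:ℝ) 1, f (qf μ t)
      = ∫⁻ x, f x ∂(Measure.map (qf μ) (volume.restrict (Set.Ioo (0:ℝ) 1))) :=
        (lintegral_map' hf.aemeasurable aemeasurable_qf).symm
    _ = ∫⁻ x, f x ∂μ := by rw [map_qf]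

end qfmeas

section qfconv

def badSet (μ : Measure ℝ) : Set ℝ :=
  {t | t ∈ Set.Ioo (0:ℝ) 1 ∧ ∃ y, qf μ t < y ∧ μ (Set.Iic y) ≤ ENNReal.ofReal t}

lemma countable_badSet (μ : Measure ℝ) [IsProbabilityMeasure μ] : (badSet μ).Countable := by
  classical
  set Y : ℝ → ℝ := fun t => if h : t ∈ badSet μ then Classical.choose h.2 else qf μ t + 1 with hY
  have hYspec : ∀ t ∈ badSet μ, qf μ t < Y t ∧ μ (Set.Iic (Y t)) ≤ ENNReal.ofReal t := by
    intro t ht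
    simp only [hY, dif_pos ht]
    exact Classical.choose_spec ht.2
  have hsep : ∀ t ∈ badSet μ, ∀ t' ∈ badSet μ, t < t' → Y t ≤ qf μ t' := by
    intro t ht t' ht' htt
    by_contra h
    push_neg at h
    have h1 : ENNReal.ofReal t' ≤ μ (Set.Iic (Y t)) := (qf_le_iff ht'.1).1 h.le
    have h2 : ENNReal.ofReal t < ENNReal.ofReal t' :=
      (ENNReal.ofReal_lt_ofReal_iff (lt_trans ht.1.1 htt)).2 htt
    exact absurd (le_trans h1 (hYspec t ht).2) (not_le.2 h2)
  have hdisj : (badSet μ).PairwiseDisjoint (fun t => Set.Ioo (qf μ t) (Y t)) := by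
    intro t ht t' ht' hne
    rcases lt_or_gt_of_ne hne with h | h
    · apply Set.disjoint_left.2
      rintro z ⟨_, hz2⟩ ⟨hz3, _⟩
      exact absurd (lt_of_le_of_lt (hsep t ht t' ht' h) hz3) (not_lt.2 hz2.le)
    · apply Set.disjoint_left.2
      rintro z ⟨hz1, _⟩ ⟨_, hz4⟩
      exact absurd (lt_of_le_of_lt (hsep t' ht' t ht h) hz1) (not_lt.2 hz4.le)
  exact hdisj.countable_of_isOpen (fun t _ => isOpen_Ioo)
    (fun t ht => Set.nonempty_Ioo.2 (hYspec t ht).1)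

lemma tendsto_qf {μ : Measure ℝ} [IsProbabilityMeasure μ] {μs : ℕ → Measure ℝ}
    (hprob : ∀ᶠ n in atTop, IsProbabilityMeasure (μs n))
    (hcdf : ∀ q : ℚ, Tendsto (fun n => μs n (Set.Iic (q:ℝ))) atTop (𝓝 (μ (Set.Iic (q:ℝ)))))
    {t : ℝ} (ht : t ∈ Set.Ioo (0:ℝ) 1) (htb : t ∉ badSet μ) :
    Tendsto (fun n => qf (μs n) t) atTop (𝓝 (qf μ t)) := by
  rw [tendsto_order]
  constructor
  · intro a ha
    obtain ⟨q, hq1, hq2⟩ := exists_rat_btwn ha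
    have hlt : μ (Set.Iic (q:ℝ)) < ENNReal.ofReal t := by
      by_contra h
      push_neg at h
      exact absurd ((qf_le_iff ht).2 h) (not_le.2 hq2)
    filter_upwards [(hcdf q).eventually_lt_const hlt, hprob] with n hn hpn
    haveI := hpn
    have : ¬ (qf (μs n) t ≤ (q:ℝ)) := by
      intro h
      exact absurd ((qf_le_iff ht).1 h) (not_le.2 hn)
    push_neg at this
    exact lt_trans hq1 this
  · intro b hb
    obtain ⟨q, hq1, hq2⟩ := exists_rat_btwn hb
    have hlt : ENNReal.ofReal t < μ (Set.Iic (q:ℝ)) := by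
      by_contra h
      push_neg at h
      exact htb ⟨ht, ⟨(q:ℝ), hq1, h⟩⟩
    filter_upwards [(hcdf q).eventually_const_lt hlt, hprob] with n hn hpn
    haveI := hpn
    exact lt_of_le_of_lt ((qf_le_iff ht).2 hn.le) hq2

end qfconv

section scheffe

lemma lintegral_tendsto_zero_of_dominated {α : Type*} [MeasurableSpace α] {ν : Measure α}
    {f G : ℕ → α → ℝ≥0∞} {g : α → ℝ≥0∞}
    (hf : ∀ n, AEMeasurable (f n) ν) (hG : ∀ n, AEMeasurable (G n) ν)
    (hle : ∀ᶠ n in atTop, f n ≤ᵐ[ν] G n)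
    (hf0 : ∀ᵐ a ∂ν, Tendsto (fun n => f n a) atTop (𝓝 0))
    (hGg : ∀ᵐ a ∂ν, Tendsto (fun n => G n a) atTop (𝓝 (g a)))
    (hGint : Tendsto (fun n => ∫⁻ a, G n a ∂ν) atTop (𝓝 (∫⁻ a, g a ∂ν)))
    (hfin : ∫⁻ a, g a ∂ν ≠ ∞) :
    Tendsto (fun n => ∫⁻ a, f n a ∂ν) atTop (𝓝 0) := by
  set L := ∫⁻ a, g a ∂ν with hL
  -- g is finite a.e.
  obtain ⟨G', hG'm, hG'e⟩ : ∃ G' : ℕ → α → ℝ≥0∞, (∀ n, Measurable (G' n)) ∧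
      ∀ᵐ a ∂ν, ∀ n, G n a = G' n a := by
    refine ⟨fun n => (hG n).mk (G n), fun n => (hG n).measurable_mk, ?_⟩
    rw [ae_all_iff]; exact fun n => (hG n).ae_eq_mk
  have hgmeas : AEMeasurable (fun a => Filter.liminf (fun n => G n a) atTop) ν := by
    refine ⟨fun a => Filter.liminf (fun n => G' n a) atTop, Measurable.liminf hG'm, ?_⟩
    filter_upwards [hG'e] with a ha
    have : (fun n => G n a) = fun n => G' n a := funext ha
    rw [this]
  have hglim : g =ᵐ[ν] (fun a => Filter.liminf (fun n => G n a) atTop) := by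
    filter_upwards [hGg] with a ha using ha.liminf_eq.symm
  have hgfin : ∀ᵐ a ∂ν, g a ≠ ∞ := by
    have h1 : ∫⁻ a, Filter.liminf (fun n => G n a) atTop ∂ν ≠ ∞ := by
      rwa [← lintegral_congr_ae hglim]
    filter_upwards [ae_lt_top' hgmeas h1, hglim] with a ha hb
    rw [hb]; exact ha.ne
  -- Fatou for G - f
  have fatou : L ≤ Filter.liminf (fun n => ∫⁻ a, G n a - f n a ∂ν) atTop := by
    have hsm : ∀ n, AEMeasurable (fun a => G n a - f n a) ν := fun n => (hG n).sub (hf n)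
    have hptw : ∀ᵐ a ∂ν, Filter.liminf (fun n => G n a - f n a) atTop = g a := by
      filter_upwards [hf0, hGg, hgfin] with a h1 h2 h3
      have : Tendsto (fun n => G n a - f n a) atTop (𝓝 (g a - 0)) :=
        ENNReal.Tendsto.sub h2 h1 (Or.inl h3)
      rw [tsub_zero] at this
      exact this.liminf_eq
    calc L = ∫⁻ a, Filter.liminf (fun n => G n a - f n a) atTop ∂ν := by
            rw [lintegral_congr_ae]
            filter_upwards [hptw] with a ha using ha
      _ ≤ Filter.liminf (fun n => ∫⁻ a, G n a - f n a ∂ν) atTop := lintegral_liminf_le' hsm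
  -- main bound
  have key : ∀ ε : ℝ≥0∞, ε ≠ 0 → ε ≠ ∞ → ∀ᶠ n in atTop, ∫⁻ a, f n a ∂ν ≤ 2 * ε := by
    intro ε hε0 hεtop
    have hGev : ∀ᶠ n in atTop, ∫⁻ a, G n a ∂ν < L + ε :=
      hGint.eventually_lt_const (ENNReal.lt_add_right hfin hε0)
    have hDev : ∀ᶠ n in atTop, L - ε ≤ ∫⁻ a, G n a - f n a ∂ν := by
      rcases le_total L ε with h | h
      · exact Filter.Eventually.of_forall (fun n => by simp [tsub_eq_zero_of_le h])
      · have hlt : L - ε < L := ENNReal.sub_lt_self hfin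
          (fun h0 => hε0 (le_antisymm (h0 ▸ h) zero_le)) hε0
        filter_upwards [Filter.eventually_lt_of_lt_liminf (lt_of_lt_of_le hlt fatou)] with n hn
        exact hn.le
    filter_upwards [hGev, hDev, hle] with n h1 h2 h3
    have hdecomp : ∫⁻ a, f n a ∂ν + ∫⁻ a, G n a - f n a ∂ν = ∫⁻ a, G n a ∂ν := by
      rw [← lintegral_add_left' (hf n)]
      apply lintegral_congr_ae
      filter_upwards [h3] with a ha
      rw [add_tsub_cancel_of_le ha]
    have h4 : ∫⁻ a, f n a ∂ν + (L - ε) ≤ L + ε := by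
      calc ∫⁻ a, f n a ∂ν + (L - ε) ≤ ∫⁻ a, f n a ∂ν + ∫⁻ a, G n a - f n a ∂ν :=
            add_le_add le_rfl h2
        _ = ∫⁻ a, G n a ∂ν := hdecomp
        _ ≤ L + ε := h1.le
    have h5 : ∫⁻ a, f n a ∂ν ≤ (L + ε) - (L - ε) := ENNReal.le_sub_of_add_le_right
      (ne_top_of_le_ne_top hfin tsub_le_self) h4
    refine h5.trans ?_
    rcases le_total L ε with h | h
    · rw [tsub_eq_zero_of_le h, tsub_zero, two_mul]
      exact add_le_add h le_rfl
    · rw [two_mul]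
      rw [tsub_le_iff_right]
      calc L + ε = ε + (ε + (L - ε)) + ε - ε := by
            rw [add_tsub_cancel_of_le h]; rw [ENNReal.add_sub_cancel_right hεtop]; ring_nf
        _ ≤ ε + ε + (L - ε) := by
            rw [ENNReal.add_sub_cancel_right hεtop]; ring_nf; exact le_rfl
  -- conclude
  rw [ENNReal.tendsto_atTop_zero]
  intro ε hε
  rcases eq_or_ne ε ∞ with rfl | hεtop
  · exact ⟨0, fun n _ => le_top⟩
  have h2 : (ε / 2) ≠ 0 := by
    simp [ENNReal.div_eq_zero_iff, hε.ne']
  have h3 : (ε / 2) ≠ ∞ := by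
    simp [ENNReal.div_eq_top, hεtop]
  obtain ⟨N, hN⟩ := (key (ε/2) h2 h3).exists_forall_of_atTop
  exact ⟨N, fun n hn => (hN n hn).trans (by rw [ENNReal.mul_div_cancel' (by norm_num) (by norm_num)])⟩

end scheffe

section hpanalysis

lemma abs_hp'_le {p : ℝ} (hp : 0 < p) (x : ℝ) : |hp' p x| ≤ p * |x| ^ (p - 1) := by
  unfold hp'
  rcases lt_trichotomy x 0 with hx | rfl | hx
  · rw [Real.sign_of_neg hx]
    rw [abs_mul, abs_mul]
    rw [abs_of_pos hp, abs_of_nonneg (Real.rpow_nonneg (abs_nonneg x) _)]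
    simp
  · simp [Real.sign_zero]
    positivity
  · rw [Real.sign_of_pos hx]
    rw [abs_mul, abs_mul]
    rw [abs_of_pos hp, abs_of_nonneg (Real.rpow_nonneg (abs_nonneg x) _)]
    simp

lemma continuous_abs_rpow {r : ℝ} (hr : 0 < r) : Continuous fun x : ℝ => |x| ^ r :=
  continuous_abs.rpow_const (fun _ => Or.inr hr.le)

lemma hp'_zero (p : ℝ) : hp' p 0 = 0 := by simp [hp', Real.sign_zero]

lemma continuous_hp' {p : ℝ} (hp : 1 < p) : Continuous (hp' p) := by
  rw [continuous_iff_continuousAt]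
  intro x
  rcases lt_trichotomy x 0 with hx | rfl | hx
  · have hc : ContinuousAt (fun y : ℝ => p * (-1) * |y| ^ (p-1)) x :=
      ((continuous_const.mul (continuous_abs_rpow (by linarith))).continuousAt)
    apply hc.congr
    filter_upwards [IsOpen.mem_nhds isOpen_Iio hx] with y hy
    simp only [hp', Real.sign_of_neg hy]
  · have hsq : Tendsto (fun y : ℝ => p * |y| ^ (p-1)) (𝓝 0) (𝓝 0) := by
      have hc : Continuous (fun y : ℝ => p * |y| ^ (p-1)) :=
        continuous_const.mul (continuous_abs_rpow (by linarith))
      have := hc.tendsto 0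
      have h0 : p - (1:ℝ) ≠ 0 := by intro h; rw [sub_eq_zero] at h; linarith
      simpa [Real.zero_rpow h0] using this
    have : Tendsto (hp' p) (𝓝 0) (𝓝 0) :=
      squeeze_zero_norm (fun y => abs_hp'_le (by linarith) y) hsq
    rw [ContinuousAt, hp'_zero]
    exact this
  · have hc : ContinuousAt (fun y : ℝ => p * 1 * |y| ^ (p-1)) x :=
      ((continuous_const.mul (continuous_abs_rpow (by linarith))).continuousAt)
    apply hc.congr
    filter_upwards [IsOpen.mem_nhds isOpen_Ioi hx] with y hy
    simp only [hp', Real.sign_of_pos hy]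

lemma rpow_add3_le {r x y z : ℝ} (hr : 0 < r) (hx : 0 ≤ x) (hy : 0 ≤ y) (hz : 0 ≤ z) :
    (x + y + z) ^ r ≤ 3 ^ r * (x ^ r + y ^ r + z ^ r) := by
  set m := max x (max y z) with hm
  have hm0 : 0 ≤ m := le_trans hx (le_max_left _ _)
  have h1 : x + y + z ≤ 3 * m := by
    have := le_max_left x (max y z)
    have h2 := le_trans (le_max_left y z) (le_max_right x (max y z))
    have h3 := le_trans (le_max_right y z) (le_max_right x (max y z))
    linarith
  have h2 : (x + y + z) ^ r ≤ (3 * m) ^ r :=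
    Real.rpow_le_rpow (by linarith) h1 hr.le
  have h3 : (3 * m : ℝ) ^ r = 3 ^ r * m ^ r := Real.mul_rpow (by norm_num) hm0
  have h4 : m ^ r ≤ x ^ r + y ^ r + z ^ r := by
    have hxr := Real.rpow_nonneg hx r
    have hyr := Real.rpow_nonneg hy r
    have hzr := Real.rpow_nonneg hz r
    rcases max_choice x (max y z) with h | h
    · rw [hm, h]; linarith
    · rcases max_choice y z with h' | h'
      · rw [hm, h, h']; linarith
      · rw [hm, h, h']; linarith
  calc (x + y + z) ^ r ≤ (3 * m) ^ r := h2
    _ = 3 ^ r * m ^ r := h3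
    _ ≤ 3 ^ r * (x ^ r + y ^ r + z ^ r) := by
        apply mul_le_mul_of_nonneg_left h4 (Real.rpow_nonneg (by norm_num) r)

lemma key_bound {p β : ℝ} (hp : 1 < p) (hβ : 1 ≤ β) (u v w : ℝ) :
    |hp' p (u - w) - hp' p (v - w)| ^ β ≤
      ((2*p) ^ β * (2 ^ (β*(p-1)) * 3 ^ (β*(p-1)))) *
        (|u| ^ (β*(p-1)) + |v| ^ (β*(p-1)) + |w| ^ (β*(p-1))) := by
  set r' := β * (p - 1) with hr'
  have hr'pos : 0 < r' := by
    have : 0 < p - 1 := by linarith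
    positivity
  set s := |u| + |v| + |w| with hs
  have hs0 : (0:ℝ) ≤ s := by positivity
  have hp1 : (0:ℝ) ≤ p - 1 := by linarith
  -- step 1: |hp' a - hp' b| ≤ 2 * p * (2*s) ^ (p-1)
  have habs : ∀ a b : ℝ, |a| ≤ 2*s → |b| ≤ 2*s →
      |hp' p a - hp' p b| ≤ 2 * p * (2*s) ^ (p-1) := by
    intro a b ha hb
    calc |hp' p a - hp' p b| ≤ |hp' p a| + |hp' p b| := abs_sub _ _
      _ ≤ p * |a| ^ (p-1) + p * |b| ^ (p-1) :=
          add_le_add (abs_hp'_le (by linarith) a) (abs_hp'_le (by linarith) b)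
      _ ≤ p * (2*s) ^ (p-1) + p * (2*s) ^ (p-1) := by
          apply add_le_add <;>
          · apply mul_le_mul_of_nonneg_left _ (by linarith)
            exact Real.rpow_le_rpow (abs_nonneg _) (by assumption) hp1
      _ = 2 * p * (2*s) ^ (p-1) := by ring
  have hu : |u - w| ≤ 2*s := by
    have := abs_sub (u) (w)
    have h1 := abs_nonneg u; have h2 := abs_nonneg v; have h3 := abs_nonneg w
    calc |u - w| ≤ |u| + |w| := abs_sub _ _
      _ ≤ 2*s := by rw [hs]; linarith
  have hv : |v - w| ≤ 2*s := by
    have h1 := abs_nonneg u; have h2 := abs_nonneg v; have h3 := abs_nonneg w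
    calc |v - w| ≤ |v| + |w| := abs_sub _ _
      _ ≤ 2*s := by rw [hs]; linarith
  have step1 := habs _ _ hu hv
  -- step 2 : raise to power β
  have step2 : |hp' p (u - w) - hp' p (v - w)| ^ β ≤ (2 * p * (2*s) ^ (p-1)) ^ β :=
    Real.rpow_le_rpow (abs_nonneg _) step1 (by linarith)
  have h2p : (0:ℝ) ≤ 2 * p := by linarith
  have h2s : (0:ℝ) ≤ 2 * s := by linarith
  have step3 : (2 * p * (2*s) ^ (p-1)) ^ β = (2*p) ^ β * (2*s) ^ r' := by
    rw [Real.mul_rpow h2p (Real.rpow_nonneg h2s _), ← Real.rpow_mul h2s, hr',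
      mul_comm β (p-1)]
  have step4 : ((2:ℝ)*s) ^ r' = 2 ^ r' * s ^ r' := Real.mul_rpow (by norm_num) hs0
  have step5 : s ^ r' ≤ 3 ^ r' * (|u| ^ r' + |v| ^ r' + |w| ^ r') :=
    rpow_add3_le hr'pos (abs_nonneg u) (abs_nonneg v) (abs_nonneg w)
  calc |hp' p (u - w) - hp' p (v - w)| ^ β ≤ (2 * p * (2*s) ^ (p-1)) ^ β := step2
    _ = (2*p) ^ β * (2 ^ r' * s ^ r') := by rw [step3, step4]
    _ ≤ (2*p) ^ β * (2 ^ r' * (3 ^ r' * (|u| ^ r' + |v| ^ r' + |w| ^ r'))) := by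
        apply mul_le_mul_of_nonneg_left _ (Real.rpow_nonneg h2p β)
        apply mul_le_mul_of_nonneg_left step5 (Real.rpow_nonneg (by norm_num) r')
    _ = ((2*p) ^ β * (2 ^ r' * 3 ^ r')) * (|u| ^ r' + |v| ^ r' + |w| ^ r') := by ring

end hpanalysis

section empirical
variable {Ω : Type*} [MeasurableSpace Ω] {X : ℕ → Ω → ℝ}

lemma empMeas_apply (n : ℕ) (X : ℕ → Ω → ℝ) (ω : Ω) {s : Set ℝ} (hs : MeasurableSet s) :
    empMeas n X ω s = (n : ℝ≥0∞)⁻¹ * ∑ i ∈ Finset.range n,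
      s.indicator (fun _ => (1:ℝ≥0∞)) (X i ω) := by
  rw [empMeas, Measure.smul_apply, smul_eq_mul]
  congr 1
  rw [Measure.finset_sum_apply]
  refine Finset.sum_congr rfl (fun i _ => ?_)
  rw [Measure.dirac_apply' _ hs]
  rfl

lemma isProbabilityMeasure_empMeas (n : ℕ) (hn : n ≠ 0) (X : ℕ → Ω → ℝ) (ω : Ω) :
    IsProbabilityMeasure (empMeas n X ω) := by
  constructor
  rw [empMeas_apply n X ω MeasurableSet.univ]
  simp only [Set.indicator_univ, Finset.sum_const, Finset.card_range, nsmul_eq_mul, mul_one]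
  rw [ENNReal.inv_mul_cancel]
  · exact_mod_cast hn
  · exact ENNReal.natCast_ne_top n

lemma empMeas_apply_ofReal (n : ℕ) (hn : n ≠ 0) (X : ℕ → Ω → ℝ) (ω : Ω) {s : Set ℝ}
    (hs : MeasurableSet s) :
    empMeas n X ω s = ENNReal.ofReal
      ((∑ i ∈ Finset.range n, s.indicator (fun _ => (1:ℝ)) (X i ω)) / n) := by
  have hnpos : (0:ℝ) < n := by exact_mod_cast Nat.pos_of_ne_zero hn
  rw [empMeas_apply n X ω hs, ENNReal.ofReal_div_of_pos hnpos,
    ENNReal.ofReal_sum_of_nonneg (fun i _ => Set.indicator_nonneg (fun _ _ => zero_le_one) _),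
    ENNReal.ofReal_natCast, div_eq_mul_inv, mul_comm]
  congr 1
  refine Finset.sum_congr rfl (fun i _ => ?_)
  by_cases hmem : X i ω ∈ s <;> simp [Set.indicator_apply, hmem]

lemma lintegral_empMeas (n : ℕ) (X : ℕ → Ω → ℝ) (ω : Ω) (f : ℝ → ℝ≥0∞) (hf : Measurable f) :
    ∫⁻ x, f x ∂(empMeas n X ω) = (n : ℝ≥0∞)⁻¹ * ∑ i ∈ Finset.range n, f (X i ω) := by
  rw [empMeas, lintegral_smul_measure, lintegral_finset_sum_measure]
  congr 1
  refine Finset.sum_congr rfl (fun i _ => ?_)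
  rw [lintegral_dirac' _ hf]

lemma measurable_empCdf (hXm : ∀ i, Measurable (X i)) (n : ℕ) (x : ℝ) :
    Measurable (fun ω => empMeas n X ω (Set.Iic x)) := by
  have : (fun ω => empMeas n X ω (Set.Iic x)) = fun ω => (n : ℝ≥0∞)⁻¹ *
      ∑ i ∈ Finset.range n, (Set.Iic x).indicator (fun _ => (1:ℝ≥0∞)) (X i ω) := by
    funext ω; exact empMeas_apply n X ω measurableSet_Iic
  rw [this]
  apply Measurable.const_mul
  apply Finset.measurable_sum
  intro i _
  exact (measurable_one.indicator measurableSet_Iic).comp (hXm i)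

lemma measurable_qe (hXm : ∀ i, Measurable (X i)) (n : ℕ) (hn : n ≠ 0) :
    Measurable (fun z : Ω × ℝ =>
      if z.2 ∈ Set.Ioo (0:ℝ) 1 then qf (empMeas n X z.1) z.2 else 0) := by
  apply measurable_of_Iic
  intro x
  have hset : (fun z : Ω × ℝ =>
      if z.2 ∈ Set.Ioo (0:ℝ) 1 then qf (empMeas n X z.1) z.2 else 0) ⁻¹' (Set.Iic x) =
      ({z : Ω × ℝ | z.2 ∈ Set.Ioo (0:ℝ) 1} ∩
        {z : Ω × ℝ | z.2 ≤ (empMeas n X z.1 (Set.Iic x)).toReal}) ∪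
      ({z : Ω × ℝ | z.2 ∈ Set.Ioo (0:ℝ) 1}ᶜ ∩ {z : Ω × ℝ | (0:ℝ) ≤ x}) := by
    ext z
    haveI := isProbabilityMeasure_empMeas n hn X z.1
    by_cases hz : z.2 ∈ Set.Ioo (0:ℝ) 1
    · simp only [Set.mem_preimage, Set.mem_Iic, if_pos hz, Set.mem_union, Set.mem_inter_iff,
        Set.mem_setOf_eq, Set.mem_compl_iff, hz, not_true, false_and, or_false, true_and,
        if_true]
      rw [qf_le_iff hz, ENNReal.ofReal_le_iff_le_toReal (measure_ne_top _ _)]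
    · simp only [Set.mem_preimage, Set.mem_Iic, if_neg hz, Set.mem_union, Set.mem_inter_iff,
        Set.mem_setOf_eq, Set.mem_compl_iff, hz, not_false_iff, false_and, true_and, false_or,
        if_false]
  rw [hset]
  have hIoo : MeasurableSet {z : Ω × ℝ | z.2 ∈ Set.Ioo (0:ℝ) 1} :=
    measurable_snd measurableSet_Ioo
  have hg : Measurable (fun z : Ω × ℝ => (empMeas n X z.1 (Set.Iic x)).toReal) :=
    ((measurable_empCdf hXm n x).comp measurable_fst).ennreal_toReal
  have h2 : MeasurableSet {z : Ω × ℝ | z.2 ≤ (empMeas n X z.1 (Set.Iic x)).toReal} :=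
    measurableSet_le measurable_snd hg
  exact (hIoo.inter h2).union (hIoo.compl.inter (MeasurableSet.const _))

end empirical

section slln
variable {Ω : Type*} [MeasurableSpace Ω] {Pr : Measure Ω} [IsProbabilityMeasure Pr]

lemma slln_comp (X : ℕ → Ω → ℝ) (hXm : ∀ i, Measurable (X i))
    (hindep : iIndepFun X Pr)
    (P : Measure ℝ) (hlaw : ∀ i, Pr.map (X i) = P)
    (φ : ℝ → ℝ) (hφ : Measurable φ) (hint : Integrable φ P) :
    ∀ᵐ ω ∂Pr, Tendsto (fun n => (∑ i ∈ Finset.range n, φ (X i ω)) / n) atTop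
      (𝓝 (∫ x, φ x ∂P)) := by
  set Y : ℕ → Ω → ℝ := fun i => φ ∘ X i with hY
  have hYint : Integrable (Y 0) Pr := by
    rw [hY]
    have h := (integrable_map_measure (μ := Pr) (f := X 0)
      (hφ.aestronglyMeasurable (μ := Pr.map (X 0))) (hXm 0).aemeasurable).1
    rw [hlaw 0] at h
    exact h hint
  have hYindep : Pairwise (Function.onFun (IndepFun · · Pr) Y) := fun i j hij =>
    (hindep.indepFun hij).comp hφ hφ
  have hYident : ∀ i, IdentDistrib (Y i) (Y 0) Pr Pr := by
    intro i
    have hid : IdentDistrib (X i) (X 0) Pr Pr :=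
      ⟨(hXm i).aemeasurable, (hXm 0).aemeasurable, by rw [hlaw i, hlaw 0]⟩
    exact hid.comp hφ
  have hmean : ∫ ω, Y 0 ω ∂Pr = ∫ x, φ x ∂P := by
    rw [hY]
    have h := integral_map (μ := Pr) (φ := X 0) (hXm 0).aemeasurable
      (hφ.aestronglyMeasurable (μ := Pr.map (X 0)))
    rw [hlaw 0] at h
    exact h.symm
  filter_upwards [ProbabilityTheory.strong_law_ae Y hYint hYindep hYident] with ω hω
  rw [hmean] at hω
  apply hω.congr
  intro n
  simp only [smul_eq_mul]
  rw [inv_mul_eq_div]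
  rfl

lemma ofReal_avg {n : ℕ} (hn : n ≠ 0) {a : ℕ → ℝ} (h0 : ∀ i, 0 ≤ a i) :
    (n:ℝ≥0∞)⁻¹ * ∑ i ∈ Finset.range n, ENNReal.ofReal (a i) =
    ENNReal.ofReal ((∑ i ∈ Finset.range n, a i)/n) := by
  have hnpos : (0:ℝ) < n := by exact_mod_cast Nat.pos_of_ne_zero hn
  rw [ENNReal.ofReal_div_of_pos hnpos, ENNReal.ofReal_sum_of_nonneg (fun i _ => h0 i),
    ENNReal.ofReal_natCast, div_eq_mul_inv, mul_comm]

end slln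

section auxmain

lemma integrable_rpow_of_le {μ : Measure ℝ} [IsProbabilityMeasure μ] {r s : ℝ} (hs : 0 < s)
    (hsr : s ≤ r) (h : Integrable (fun x => |x| ^ r) μ) :
    Integrable (fun x => |x| ^ s) μ := by
  apply Integrable.mono' ((integrable_const (1:ℝ)).add h)
  · exact (continuous_abs_rpow hs).aestronglyMeasurable
  · apply Filter.Eventually.of_forall
    intro x
    simp only [Pi.add_apply]
    rw [Real.norm_eq_abs, abs_of_nonneg (Real.rpow_nonneg (abs_nonneg x) s)]
    rcases le_total (|x|) 1 with hx | hx
    · have h1 : |x| ^ s ≤ 1 := Real.rpow_le_one (abs_nonneg x) hx hs.le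
      have h2 : (0:ℝ) ≤ |x| ^ r := Real.rpow_nonneg (abs_nonneg x) r
      linarith
    · have h1 : |x| ^ s ≤ |x| ^ r := Real.rpow_le_rpow_of_exponent_le hx hsr
      linarith

lemma empMeas_zero {Ω : Type*} [MeasurableSpace Ω] (X : ℕ → Ω → ℝ) (ω : Ω) :
    empMeas 0 X ω = 0 := by
  simp [empMeas]

lemma qf_zero_measure (t : ℝ) : qf (0 : Measure ℝ) t = 0 := by
  unfold qf
  rcases le_or_gt t 0 with ht | ht
  · have : {x : ℝ | ENNReal.ofReal t ≤ (0 : Measure ℝ) (Set.Iic x)} = Set.univ := by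
      ext x
      simp [ENNReal.ofReal_eq_zero.2 ht]
    rw [this]
    apply Real.sInf_of_not_bddBelow
    intro ⟨b, hb⟩
    exact absurd (hb (Set.mem_univ (b-1))) (by norm_num)
  · have : {x : ℝ | ENNReal.ofReal t ≤ (0 : Measure ℝ) (Set.Iic x)} = ∅ := by
      ext x
      simp [ENNReal.ofReal_pos.2 ht, (ENNReal.ofReal_pos.2 ht).ne']
    rw [this]
    exact Real.sInf_empty

lemma aemeasurable_qf_emp {Ω : Type*} [MeasurableSpace Ω] (X : ℕ → Ω → ℝ) (ω : Ω) (n : ℕ) :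
    AEMeasurable (qf (empMeas n X ω)) (volume.restrict (Set.Ioo (0:ℝ) 1)) := by
  rcases Nat.eq_zero_or_pos n with rfl | hn
  · have : qf (empMeas 0 X ω) = fun _ => (0:ℝ) := by
      funext t
      rw [empMeas_zero, qf_zero_measure]
    rw [this]
    exact aemeasurable_const
  · haveI := isProbabilityMeasure_empMeas n (Nat.pos_iff_ne_zero.1 hn) X ω
    exact aemeasurable_qf

lemma aemeasurable_inner {α : Type*} [MeasurableSpace α] {ν : Measure α} {p β : ℝ}
    (hp : 1 < p) (hβ : 0 < β) {e g h : α → ℝ} (he : AEMeasurable e ν) (hg : AEMeasurable g ν)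
    (hh : AEMeasurable h ν) :
    AEMeasurable (fun t => |hp' p (e t - h t) - hp' p (g t - h t)| ^ β) ν := by
  have h1 : AEMeasurable (fun t => hp' p (e t - h t)) ν :=
    (continuous_hp' hp).measurable.comp_aemeasurable (he.sub hh)
  have h2 : AEMeasurable (fun t => hp' p (g t - h t)) ν :=
    (continuous_hp' hp).measurable.comp_aemeasurable (hg.sub hh)
  exact (continuous_abs_rpow hβ).measurable.comp_aemeasurable (h1.sub h2)

lemma measurable_IoutF {Ω : Type*} [MeasurableSpace Ω] {X : ℕ → Ω → ℝ}
    (hXm : ∀ i, Measurable (X i)) (P Q : Measure ℝ) [IsProbabilityMeasure P]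
    [IsProbabilityMeasure Q] {p β : ℝ} (hp : 1 < p) (hβ : 0 < β) (n : ℕ) (hn : n ≠ 0) :
    Measurable (fun ω => ∫⁻ t in Set.Ioo (0:ℝ) 1,
      ENNReal.ofReal (|hp' p (qf (empMeas n X ω) t - qf Q t) -
        hp' p (qf P t - qf Q t)| ^ β)) := by
  classical
  set qP : ℝ → ℝ := fun t => if t ∈ Set.Ioo (0:ℝ) 1 then qf P t else 0 with hqP
  set qQ : ℝ → ℝ := fun t => if t ∈ Set.Ioo (0:ℝ) 1 then qf Q t else 0 with hqQ
  set qE : Ω × ℝ → ℝ := fun z =>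
    if z.2 ∈ Set.Ioo (0:ℝ) 1 then qf (empMeas n X z.1) z.2 else 0 with hqE
  have hkey : (fun ω => ∫⁻ t in Set.Ioo (0:ℝ) 1,
      ENNReal.ofReal (|hp' p (qf (empMeas n X ω) t - qf Q t) -
        hp' p (qf P t - qf Q t)| ^ β)) = fun ω => ∫⁻ t in Set.Ioo (0:ℝ) 1,
      ENNReal.ofReal (|hp' p (qE (ω, t) - qQ t) - hp' p (qP t - qQ t)| ^ β) := by
    funext ω
    apply lintegral_congr_ae
    filter_upwards [ae_restrict_mem measurableSet_Ioo] with t ht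
    simp only [hqP, hqQ, hqE, if_pos ht]
  rw [hkey]
  apply Measurable.lintegral_prod_right
  have hqPm : Measurable qP := measurable_qf_if
  have hqQm : Measurable qQ := measurable_qf_if
  have hqEm : Measurable qE := measurable_qe hXm n hn
  have hhp : Measurable (hp' p) := (continuous_hp' hp).measurable
  have h1 : Measurable (fun z : Ω × ℝ => hp' p (qE z - qQ z.2)) :=
    hhp.comp (hqEm.sub (hqQm.comp measurable_snd))
  have h2 : Measurable (fun z : Ω × ℝ => hp' p (qP z.2 - qQ z.2)) :=
    hhp.comp ((hqPm.comp measurable_snd).sub (hqQm.comp measurable_snd))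
  exact ((continuous_abs_rpow hβ).measurable.comp (h1.sub h2)).ennreal_ofReal

end auxmain

/-- For `p > 1`, `β ≥ 1`, `γ > 0` and probability measures `P, Q` on `ℝ`
with finite moments of order `β(p−1)(1+γ)`, with `Fₙ` the empirical distribution of `n`
i.i.d. samples from `P`,
`E[∫₀¹ |h_p'(Fₙ^{-1}(t) − G^{-1}(t)) − h_p'(F^{-1}(t) − G^{-1}(t))|^β dt] → 0`. -/
theorem statement12 {Ω : Type*} [MeasurableSpace Ω] (Pr : Measure Ω) [IsProbabilityMeasure Pr]
    (p β γ : ℝ) (hp : 1 < p) (hβ : 1 ≤ β) (hγ : 0 < γ)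
    (P Q : Measure ℝ) [IsProbabilityMeasure P] [IsProbabilityMeasure Q]
    (hPmom : Integrable (fun x => |x| ^ (β * (p - 1) * (1 + γ))) P)
    (hQmom : Integrable (fun x => |x| ^ (β * (p - 1) * (1 + γ))) Q)
    (X : ℕ → Ω → ℝ) (hXm : ∀ i, Measurable (X i))
    (hindep : iIndepFun X Pr)
    (hlaw : ∀ i, Pr.map (X i) = P) :
    Tendsto (fun n => ∫ ω, (∫ t in Set.Ioo (0:ℝ) 1,
        |hp' p (qf (empMeas n X ω) t - qf Q t) - hp' p (qf P t - qf Q t)| ^ β) ∂Pr)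
      atTop (nhds 0) := by
  classical
  have hppos : (0:ℝ) < p := by linarith
  have hβpos : (0:ℝ) < β := by linarith
  set r' := β * (p - 1) with hr'def
  have hr'pos : 0 < r' := by rw [hr'def]; nlinarith
  have hrr' : r' ≤ β * (p - 1) * (1 + γ) := by rw [hr'def]; nlinarith
  have hPmom' : Integrable (fun x => |x| ^ r') P := integrable_rpow_of_le hr'pos hrr' hPmom
  have hQmom' : Integrable (fun x => |x| ^ r') Q := integrable_rpow_of_le hr'pos hrr' hQmom
  set mP := ∫⁻ x, ENNReal.ofReal (|x| ^ r') ∂P with hmPdef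
  set mQ := ∫⁻ x, ENNReal.ofReal (|x| ^ r') ∂Q with hmQdef
  have hnn : ∀ x : ℝ, 0 ≤ |x| ^ r' := fun x => Real.rpow_nonneg (abs_nonneg x) r'
  have hmPval : ENNReal.ofReal (∫ x, |x| ^ r' ∂P) = mP :=
    ofReal_integral_eq_lintegral_ofReal hPmom' (Filter.Eventually.of_forall hnn)
  have hmPfin : mP ≠ ∞ := by rw [← hmPval]; exact ENNReal.ofReal_ne_top
  have hmQval : ENNReal.ofReal (∫ x, |x| ^ r' ∂Q) = mQ :=
    ofReal_integral_eq_lintegral_ofReal hQmom' (Filter.Eventually.of_forall hnn)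
  have hmQfin : mQ ≠ ∞ := by rw [← hmQval]; exact ENNReal.ofReal_ne_top
  set C := (2*p) ^ β * (2 ^ r' * 3 ^ r') with hCdef
  have hC0 : 0 ≤ C := by positivity
  set c1 := ENNReal.ofReal C with hc1def
  have hc1top : c1 ≠ ∞ := ENNReal.ofReal_ne_top
  have hmeas_rp : Measurable (fun x : ℝ => ENNReal.ofReal (|x| ^ r')) :=
    (continuous_abs_rpow hr'pos).measurable.ennreal_ofReal
  -- abbreviations
  set eP : ℝ → ℝ≥0∞ := fun t => ENNReal.ofReal (|qf P t| ^ r') with hePdef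
  set eQ : ℝ → ℝ≥0∞ := fun t => ENNReal.ofReal (|qf Q t| ^ r') with heQdef
  set eE : ℕ → Ω → ℝ → ℝ≥0∞ := fun n ω t =>
    ENNReal.ofReal (|qf (empMeas n X ω) t| ^ r') with heEdef
  set Iout : ℕ → Ω → ℝ≥0∞ := fun n ω => ∫⁻ t in Set.Ioo (0:ℝ) 1,
    ENNReal.ofReal (|hp' p (qf (empMeas n X ω) t - qf Q t) -
      hp' p (qf P t - qf Q t)| ^ β) with hIoutdef
  set A : ℕ → Ω → ℝ≥0∞ := fun n ω =>
    (n:ℝ≥0∞)⁻¹ * ∑ i ∈ Finset.range n, ENNReal.ofReal (|X i ω| ^ r') with hAdef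
  -- a.e. events
  have hcdf_ae : ∀ᵐ ω ∂Pr, ∀ q : ℚ, Tendsto (fun n => empMeas n X ω (Set.Iic (q:ℝ)))
      atTop (𝓝 (P (Set.Iic (q:ℝ)))) := by
    rw [ae_all_iff]
    intro q
    have hφm : Measurable ((Set.Iic (q:ℝ)).indicator (fun _ => (1:ℝ))) :=
      measurable_const.indicator measurableSet_Iic
    have hφint : Integrable ((Set.Iic (q:ℝ)).indicator (fun _ => (1:ℝ))) P := by
      apply Integrable.mono' (integrable_const (1:ℝ)) hφm.aestronglyMeasurable
      apply Filter.Eventually.of_forall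
      intro x
      by_cases hx : x ∈ Set.Iic (q:ℝ) <;> simp [Set.indicator_apply, hx]
    filter_upwards [slln_comp X hXm hindep P hlaw _ hφm hφint] with ω hω
    have hval : ∫ x, (Set.Iic (q:ℝ)).indicator (fun _ => (1:ℝ)) x ∂P
        = (P (Set.Iic (q:ℝ))).toReal := by
      rw [integral_indicator_const (1:ℝ) measurableSet_Iic]; simp [measureReal_def]
    rw [hval] at hω
    have h1 := (ENNReal.tendsto_ofReal hω)
    rw [ENNReal.ofReal_toReal (measure_ne_top _ _)] at h1
    apply h1.congr'
    filter_upwards [eventually_ge_atTop 1] with n hn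
    exact (empMeas_apply_ofReal n (by omega) X ω measurableSet_Iic).symm
  have havg_ae : ∀ᵐ ω ∂Pr, Tendsto (fun n => (∑ i ∈ Finset.range n, |X i ω| ^ r')/n)
      atTop (𝓝 (∫ x, |x| ^ r' ∂P)) :=
    slln_comp X hXm hindep P hlaw _ (continuous_abs_rpow hr'pos).measurable hPmom'
  -- pointwise bound
  have hptbound : ∀ n ω t, ENNReal.ofReal (|hp' p (qf (empMeas n X ω) t - qf Q t) -
      hp' p (qf P t - qf Q t)| ^ β) ≤ c1 * (eE n ω t + eP t + eQ t) := by
    intro n ω t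
    have hkb := key_bound (p := p) (β := β) hp hβ (qf (empMeas n X ω) t) (qf P t) (qf Q t)
    calc ENNReal.ofReal (|hp' p (qf (empMeas n X ω) t - qf Q t) -
        hp' p (qf P t - qf Q t)| ^ β)
        ≤ ENNReal.ofReal (C * (|qf (empMeas n X ω) t| ^ r' + |qf P t| ^ r' + |qf Q t| ^ r')) := by
          apply ENNReal.ofReal_le_ofReal
          rw [hCdef, hr'def]
          exact hkb
      _ = c1 * (eE n ω t + eP t + eQ t) := by
          rw [ENNReal.ofReal_mul hC0, ENNReal.ofReal_add (by positivity) (hnn _),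
            ENNReal.ofReal_add (hnn _) (hnn _)]
  -- integral of the bound in t
  have hGint_t : ∀ n ω, n ≠ 0 → ∫⁻ t in Set.Ioo (0:ℝ) 1, c1 * (eE n ω t + eP t + eQ t) =
      c1 * (A n ω + mP + mQ) := by
    intro n ω hn
    haveI := isProbabilityMeasure_empMeas n hn X ω
    have heEm : AEMeasurable (eE n ω) (volume.restrict (Set.Ioo (0:ℝ) 1)) :=
      hmeas_rp.comp_aemeasurable (aemeasurable_qf_emp X ω n)
    have hePm : AEMeasurable eP (volume.restrict (Set.Ioo (0:ℝ) 1)) :=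
      hmeas_rp.comp_aemeasurable aemeasurable_qf
    rw [lintegral_const_mul' _ _ hc1top]
    congr 1
    rw [lintegral_add_left' (f := fun t => eE n ω t + eP t) (heEm.add hePm), lintegral_add_left' heEm]
    have h1 : ∫⁻ t in Set.Ioo (0:ℝ) 1, eE n ω t = A n ω := by
      rw [heEdef, hAdef]
      simp only
      rw [lintegral_qf _ hmeas_rp, lintegral_empMeas n X ω _ hmeas_rp]
    have h2 : ∫⁻ t in Set.Ioo (0:ℝ) 1, eP t = mP := by
      rw [hePdef, hmPdef]
      simp only
      rw [lintegral_qf _ hmeas_rp]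
    have h3 : ∫⁻ t in Set.Ioo (0:ℝ) 1, eQ t = mQ := by
      rw [heQdef, hmQdef]
      simp only
      rw [lintegral_qf _ hmeas_rp]
    rw [h1, h2, h3]
  -- Claim A: inner convergence for good ω
  have claimA : ∀ ω, (∀ q : ℚ, Tendsto (fun n => empMeas n X ω (Set.Iic (q:ℝ)))
        atTop (𝓝 (P (Set.Iic (q:ℝ))))) →
      Tendsto (fun n => (∑ i ∈ Finset.range n, |X i ω| ^ r')/n)
        atTop (𝓝 (∫ x, |x| ^ r' ∂P)) →
      Tendsto (fun n => Iout n ω) atTop (𝓝 0) := by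
    intro ω hcdf havg
    have hprob : ∀ᶠ n in atTop, IsProbabilityMeasure (empMeas n X ω) := by
      filter_upwards [eventually_ge_atTop 1] with n hn
      exact isProbabilityMeasure_empMeas n (by omega) X ω
    have hbad0 : (volume.restrict (Set.Ioo (0:ℝ) 1)) (badSet P) = 0 :=
      le_antisymm (le_trans (Measure.restrict_le_self _)
        (le_of_eq ((countable_badSet P).measure_zero _))) zero_le
    have hbad : ∀ᵐ t ∂(volume.restrict (Set.Ioo (0:ℝ) 1)), t ∉ badSet P :=
      measure_eq_zero_iff_ae_notMem.1 hbad0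
    apply lintegral_tendsto_zero_of_dominated
      (G := fun n t => c1 * (eE n ω t + eP t + eQ t))
      (g := fun t => c1 * (eP t + eP t + eQ t))
    · intro n
      exact (ENNReal.measurable_ofReal).comp_aemeasurable
        (aemeasurable_inner hp hβpos (aemeasurable_qf_emp X ω n)
          aemeasurable_qf aemeasurable_qf)
    · intro n
      have heEm : AEMeasurable (eE n ω) (volume.restrict (Set.Ioo (0:ℝ) 1)) :=
        hmeas_rp.comp_aemeasurable (aemeasurable_qf_emp X ω n)
      have hePm : AEMeasurable eP (volume.restrict (Set.Ioo (0:ℝ) 1)) :=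
        hmeas_rp.comp_aemeasurable aemeasurable_qf
      have heQm : AEMeasurable eQ (volume.restrict (Set.Ioo (0:ℝ) 1)) :=
        hmeas_rp.comp_aemeasurable aemeasurable_qf
      exact (((heEm.add hePm).add heQm)).const_mul c1
    · exact Filter.Eventually.of_forall (fun n =>
        Filter.Eventually.of_forall (fun t => hptbound n ω t))
    · -- pointwise convergence to 0
      filter_upwards [ae_restrict_mem measurableSet_Ioo, hbad] with t ht htb
      have hqt : Tendsto (fun n => qf (empMeas n X ω) t) atTop (𝓝 (qf P t)) :=
        tendsto_qf hprob (fun q => hcdf q) ht htb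
      have hcont : Continuous (fun y : ℝ =>
          ENNReal.ofReal (|hp' p (y - qf Q t) - hp' p (qf P t - qf Q t)| ^ β)) := by
        apply Continuous.comp ENNReal.continuous_ofReal
        apply (continuous_abs_rpow hβpos).comp
        exact ((continuous_hp' hp).comp (continuous_id.sub continuous_const)).sub
          continuous_const
      have h2 := (hcont.tendsto (qf P t)).comp hqt
      simp only [Function.comp_def, sub_self, abs_zero,
        Real.zero_rpow (ne_of_gt hβpos), ENNReal.ofReal_zero] at h2
      exact h2
    · -- convergence of G to g
      filter_upwards [ae_restrict_mem measurableSet_Ioo, hbad] with t ht htb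
      have hqt : Tendsto (fun n => qf (empMeas n X ω) t) atTop (𝓝 (qf P t)) :=
        tendsto_qf hprob (fun q => hcdf q) ht htb
      have hcont : Continuous (fun y : ℝ => ENNReal.ofReal (|y| ^ r')) :=
        ENNReal.continuous_ofReal.comp (continuous_abs_rpow hr'pos)
      have h1 : Tendsto (fun n => eE n ω t) atTop (𝓝 (eP t)) := by
        have := (hcont.tendsto (qf P t)).comp hqt
        exact this
      exact ENNReal.Tendsto.const_mul ((h1.add tendsto_const_nhds).add tendsto_const_nhds)
        (Or.inr hc1top)
    · -- convergence of integrals of G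
      have hgval : ∫⁻ t in Set.Ioo (0:ℝ) 1, c1 * (eP t + eP t + eQ t)
          = c1 * (mP + mP + mQ) := by
        have hePm : AEMeasurable eP (volume.restrict (Set.Ioo (0:ℝ) 1)) :=
          hmeas_rp.comp_aemeasurable aemeasurable_qf
        rw [lintegral_const_mul' _ _ hc1top]
        congr 1
        rw [lintegral_add_left' (f := fun t => eP t + eP t) (hePm.add hePm), lintegral_add_left' hePm]
        have h2 : ∫⁻ t in Set.Ioo (0:ℝ) 1, eP t = mP := by
          rw [hePdef, hmPdef]; simp only; rw [lintegral_qf _ hmeas_rp]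
        have h3 : ∫⁻ t in Set.Ioo (0:ℝ) 1, eQ t = mQ := by
          rw [heQdef, hmQdef]; simp only; rw [lintegral_qf _ hmeas_rp]
        rw [h2, h3]
      rw [hgval]
      have havgE : Tendsto (fun n => A n ω) atTop (𝓝 mP) := by
        have h1 := ENNReal.tendsto_ofReal havg
        rw [hmPval] at h1
        apply h1.congr'
        filter_upwards [eventually_ge_atTop 1] with n hn
        rw [hAdef]
        simp only
        exact (ofReal_avg (Nat.one_le_iff_ne_zero.1 hn) (fun i => hnn (X i ω))).symm
      have htend : Tendsto (fun n => c1 * (A n ω + mP + mQ)) atTop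
          (𝓝 (c1 * (mP + mP + mQ))) :=
        ENNReal.Tendsto.const_mul ((havgE.add tendsto_const_nhds).add tendsto_const_nhds)
          (Or.inr hc1top)
      apply htend.congr'
      filter_upwards [eventually_ge_atTop 1] with n hn
      exact (hGint_t n ω (by omega)).symm
    · -- finiteness
      have hgval : ∫⁻ t in Set.Ioo (0:ℝ) 1, c1 * (eP t + eP t + eQ t)
          = c1 * (mP + mP + mQ) := by
        have hePm : AEMeasurable eP (volume.restrict (Set.Ioo (0:ℝ) 1)) :=
          hmeas_rp.comp_aemeasurable aemeasurable_qf
        rw [lintegral_const_mul' _ _ hc1top]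
        congr 1
        rw [lintegral_add_left' (f := fun t => eP t + eP t) (hePm.add hePm), lintegral_add_left' hePm]
        have h2 : ∫⁻ t in Set.Ioo (0:ℝ) 1, eP t = mP := by
          rw [hePdef, hmPdef]; simp only; rw [lintegral_qf _ hmeas_rp]
        have h3 : ∫⁻ t in Set.Ioo (0:ℝ) 1, eQ t = mQ := by
          rw [heQdef, hmQdef]; simp only; rw [lintegral_qf _ hmeas_rp]
        rw [h2, h3]
      rw [hgval]
      exact ENNReal.mul_ne_top hc1top
        (ENNReal.add_ne_top.2 ⟨ENNReal.add_ne_top.2 ⟨hmPfin, hmPfin⟩, hmQfin⟩)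
  -- Claim B : outer Scheffé argument
  have hfmeas : ∀ n, AEMeasurable (Iout n) Pr := by
    intro n
    rcases Nat.eq_zero_or_pos n with rfl | hn
    · have hconst : Iout 0 = fun _ => ∫⁻ t in Set.Ioo (0:ℝ) 1,
          ENNReal.ofReal (|hp' p (0 - qf Q t) - hp' p (qf P t - qf Q t)| ^ β) := by
        funext ω
        rw [hIoutdef]
        simp only
        apply lintegral_congr
        intro t
        rw [empMeas_zero, qf_zero_measure]
      rw [hconst]
      exact aemeasurable_const
    · have := measurable_IoutF (X := X) hXm P Q hp hβpos n (Nat.pos_iff_ne_zero.1 hn)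
      rw [hIoutdef]
      exact this.aemeasurable
  have hGmeas : ∀ n, Measurable (fun ω => c1 * (A n ω + mP + mQ)) := by
    intro n
    apply Measurable.const_mul
    apply Measurable.add_const
    apply Measurable.add_const
    rw [hAdef]
    simp only
    apply Measurable.const_mul
    exact Finset.measurable_sum _ (fun i _ => hmeas_rp.comp (hXm i))
  have hle_out : ∀ n (ω : Ω), n ≠ 0 → Iout n ω ≤ c1 * (A n ω + mP + mQ) := by
    intro n ω hn
    calc Iout n ω ≤ ∫⁻ t in Set.Ioo (0:ℝ) 1, c1 * (eE n ω t + eP t + eQ t) := by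
          rw [hIoutdef]
          exact lintegral_mono (fun t => hptbound n ω t)
      _ = c1 * (A n ω + mP + mQ) := hGint_t n ω hn
  have hAfin : ∀ n (ω : Ω), n ≠ 0 → A n ω ≠ ∞ := by
    intro n ω hn
    rw [hAdef]
    simp only
    apply ENNReal.mul_ne_top (ENNReal.inv_ne_top.2 (by exact_mod_cast hn))
    exact (ENNReal.sum_lt_top.2 (fun i _ => ENNReal.ofReal_lt_top)).ne
  have hGfin : ∀ n (ω : Ω), n ≠ 0 → c1 * (A n ω + mP + mQ) ≠ ∞ := by
    intro n ω hn
    exact ENNReal.mul_ne_top hc1top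
      (ENNReal.add_ne_top.2 ⟨ENNReal.add_ne_top.2 ⟨hAfin n ω hn, hmPfin⟩, hmQfin⟩)
  have hGconst : ∀ n, n ≠ 0 → ∫⁻ ω, c1 * (A n ω + mP + mQ) ∂Pr = c1 * (mP + mP + mQ) := by
    intro n hn
    have hAm : Measurable (A n) := by
      rw [hAdef]
      simp only
      apply Measurable.const_mul
      exact Finset.measurable_sum _ (fun i _ => hmeas_rp.comp (hXm i))
    have hAint : ∫⁻ ω, A n ω ∂Pr = mP := by
      rw [hAdef]
      simp only
      rw [lintegral_const_mul' _ _ (ENNReal.inv_ne_top.2 (by exact_mod_cast hn) : ((n:ℝ≥0∞)⁻¹ ≠ ∞))]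
      have hXir : ∀ i : ℕ, Measurable fun ω => ENNReal.ofReal (|X i ω| ^ r') :=
        fun i => hmeas_rp.comp (hXm i)
      rw [lintegral_finset_sum _ (fun i _ => hXir i)]
      have hterm : ∀ i, ∫⁻ ω, ENNReal.ofReal (|X i ω| ^ r') ∂Pr = mP := by
        intro i
        rw [hmPdef, ← hlaw i, lintegral_map hmeas_rp (hXm i)]
      rw [Finset.sum_congr rfl (fun i _ => hterm i)]
      rw [Finset.sum_const, Finset.card_range, nsmul_eq_mul, ← mul_assoc,
        ENNReal.inv_mul_cancel (by exact_mod_cast hn) (ENNReal.natCast_ne_top n), one_mul]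
    rw [lintegral_const_mul' _ _ hc1top]
    congr 1
    rw [lintegral_add_right' _ aemeasurable_const, lintegral_add_right' _ aemeasurable_const,
      hAint, lintegral_const, lintegral_const, measure_univ, mul_one, mul_one]
  have hconstint : ∫⁻ _ : Ω, c1 * (mP + mP + mQ) ∂Pr = c1 * (mP + mP + mQ) := by
    rw [lintegral_const, measure_univ, mul_one]
  have hmain : Tendsto (fun n => ∫⁻ ω, Iout n ω ∂Pr) atTop (𝓝 0) := by
    apply lintegral_tendsto_zero_of_dominated
      (G := fun n ω => c1 * (A n ω + mP + mQ)) (g := fun _ => c1 * (mP + mP + mQ))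
      hfmeas (fun n => (hGmeas n).aemeasurable)
    · filter_upwards [eventually_ge_atTop 1] with n hn
      exact Filter.Eventually.of_forall (fun ω => hle_out n ω (Nat.one_le_iff_ne_zero.1 hn))
    · filter_upwards [hcdf_ae, havg_ae] with ω h1 h2 using claimA ω h1 h2
    · filter_upwards [havg_ae] with ω havg
      have havgE : Tendsto (fun n => A n ω) atTop (𝓝 mP) := by
        have h1 := ENNReal.tendsto_ofReal havg
        rw [hmPval] at h1
        apply h1.congr'
        filter_upwards [eventually_ge_atTop 1] with n hn
        rw [hAdef]
        simp only
        exact (ofReal_avg (Nat.one_le_iff_ne_zero.1 hn) (fun i => hnn (X i ω))).symm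
      exact ENNReal.Tendsto.const_mul
        ((havgE.add tendsto_const_nhds).add tendsto_const_nhds) (Or.inr hc1top)
    · rw [hconstint]
      apply tendsto_const_nhds.congr'
      filter_upwards [eventually_ge_atTop 1] with n hn
      exact (hGconst n (Nat.one_le_iff_ne_zero.1 hn)).symm
    · rw [hconstint]
      exact ENNReal.mul_ne_top hc1top
        (ENNReal.add_ne_top.2 ⟨ENNReal.add_ne_top.2 ⟨hmPfin, hmPfin⟩, hmQfin⟩)
  -- conclusion : convert Bochner integrals to lintegrals
  have hfinIout : ∀ n (ω : Ω), n ≠ 0 → Iout n ω ≠ ∞ :=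
    fun n ω hn => ne_top_of_le_ne_top (hGfin n ω hn) (hle_out n ω hn)
  have heq : ∀ᶠ n in atTop, ∫ ω, (∫ t in Set.Ioo (0:ℝ) 1,
      |hp' p (qf (empMeas n X ω) t - qf Q t) - hp' p (qf P t - qf Q t)| ^ β) ∂Pr
      = (∫⁻ ω, Iout n ω ∂Pr).toReal := by
    filter_upwards [eventually_ge_atTop 1] with n hn
    have hn0 : n ≠ 0 := Nat.one_le_iff_ne_zero.1 hn
    have hinner : ∀ ω : Ω, ∫ t in Set.Ioo (0:ℝ) 1,
        |hp' p (qf (empMeas n X ω) t - qf Q t) - hp' p (qf P t - qf Q t)| ^ β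
        = (Iout n ω).toReal := by
      intro ω
      rw [hIoutdef]
      simp only
      rw [integral_eq_lintegral_of_nonneg_ae
        (Filter.Eventually.of_forall (fun t => Real.rpow_nonneg (abs_nonneg _) β))
        (aemeasurable_inner hp hβpos (aemeasurable_qf_emp X ω n)
          aemeasurable_qf aemeasurable_qf).aestronglyMeasurable]
    calc ∫ ω, (∫ t in Set.Ioo (0:ℝ) 1,
        |hp' p (qf (empMeas n X ω) t - qf Q t) - hp' p (qf P t - qf Q t)| ^ β) ∂Pr
        = ∫ ω, (Iout n ω).toReal ∂Pr := by
          apply integral_congr_ae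
          exact Filter.Eventually.of_forall hinner
      _ = (∫⁻ ω, ENNReal.ofReal ((Iout n ω).toReal) ∂Pr).toReal := by
          rw [integral_eq_lintegral_of_nonneg_ae
            (Filter.Eventually.of_forall (fun ω => ENNReal.toReal_nonneg))
            (hfmeas n).ennreal_toReal.aestronglyMeasurable]
      _ = (∫⁻ ω, Iout n ω ∂Pr).toReal := by
          congr 1
          apply lintegral_congr
          intro ω
          rw [ENNReal.ofReal_toReal (hfinIout n ω hn0)]
  have hfinal := (ENNReal.tendsto_toReal (by simp : (0:ℝ≥0∞) ≠ ∞)).comp hmain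
  rw [ENNReal.toReal_zero] at hfinal
  apply hfinal.congr'
  filter_upwards [heq] with n h
  rw [Function.comp_apply, ← h]
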